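/- arXiv:1904.02009 — 3 statements merged into one kernel-verified Lean document; each statement's English description precedes it below -/
import Mathlib

section
/- Let X be a Tychonoff space, αX a Hausdorff compactification of X, and {K_i}_{i∈I} a family of pairwise disjoint nonempty compact subsets of the remainder αX ∖ X that is locally finite in αX. Then the quotient space γX of αX obtained by collapsing each K_i to a single point p_i (with distinct points p_i for distinct i, and all other points left fixed) is a Hausdorff compactification of X, and the quotient map h : αX → γX is continuous with h(x) = x for x ∉ ⋃ K_i and h(x) = p_i for x ∈ K_i. -/
/-- The relation identifying the points within each member of a family of sets. -/
def collapseRel {α : Type*} {I : Type*} (K : I → Set α) (x y : α) : Prop :=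
  x = y ∨ ∃ i, x ∈ K i ∧ y ∈ K i

/-- The setoid on `α` generated by collapsing each member of the family `K`
to a single point. -/
def collapseSetoid {α : Type*} {I : Type*} (K : I → Set α) : Setoid α :=
  Relation.EqvGen.setoid (collapseRel K)

section Aux

variable {α : Type*} {I : Type*}

private lemma collapse_index_eq {K : I → Set α} (hdisj : Pairwise (Function.onFun Disjoint K))
    {i j : I} {y : α} (hy : y ∈ K i) (hy' : y ∈ K j) : i = j := by
  by_contra h
  exact Set.disjoint_left.mp (hdisj h) hy hy'

private lemma collapseRel_equivalence (K : I → Set α)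
    (hdisj : Pairwise (Function.onFun Disjoint K)) : Equivalence (collapseRel K) := by
  constructor
  · intro x; exact Or.inl rfl
  · rintro x y (rfl | ⟨i, hx, hy⟩)
    · exact Or.inl rfl
    · exact Or.inr ⟨i, hy, hx⟩
  · rintro x y z (rfl | ⟨i, hx, hy⟩) h2
    · exact h2
    rcases h2 with rfl | ⟨j, hy', hz⟩
    · exact Or.inr ⟨i, hx, hy⟩
    · obtain rfl := collapse_index_eq hdisj hy hy'
      exact Or.inr ⟨i, hx, hz⟩

private lemma collapse_mk_eq_iff (K : I → Set α)
    (hdisj : Pairwise (Function.onFun Disjoint K)) {x y : α} :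
    Quotient.mk (collapseSetoid K) x = Quotient.mk (collapseSetoid K) y ↔ collapseRel K x y := by
  rw [Quotient.eq]
  exact (collapseRel_equivalence K hdisj).eqvGen_iff

end Aux

/-- Magill-type theorem: let `α` be a Hausdorff compactification of a Tychonoff
space `X` (viewed as a dense subset of `α`), and `{K i}` a locally finite family
of pairwise disjoint nonempty compact subsets of the remainder `α \ X`.  Then the
quotient `γ` of `α` collapsing each `K i` to a point is a Hausdorff
compactification of `X`: the quotient map `h` is continuous, `γ` is compact
Hausdorff, `X` maps onto a dense subset by a topological embedding fixing `X`
(i.e. injectively, with `h` injective off `⋃ i, K i`), and the points `p i = h`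
of the classes `K i` are pairwise distinct. -/
theorem stmt2 {α : Type*} [TopologicalSpace α] [CompactSpace α] [T2Space α]
    (X : Set α) (hX : Dense X) {I : Type*} (K : I → Set α)
    (hKX : ∀ i, K i ⊆ Xᶜ) (hcpt : ∀ i, IsCompact (K i))
    (hne : ∀ i, (K i).Nonempty) (hdisj : Pairwise (Function.onFun Disjoint K))
    (hlf : LocallyFinite K) :
    Continuous (Quotient.mk (collapseSetoid K)) ∧
    CompactSpace (Quotient (collapseSetoid K)) ∧
    T2Space (Quotient (collapseSetoid K)) ∧
    IsDenseEmbedding (fun x : X => Quotient.mk (collapseSetoid K) (x : α)) ∧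
    (∀ x y : α, x ∉ ⋃ i, K i → y ∉ ⋃ i, K i →
      Quotient.mk (collapseSetoid K) x = Quotient.mk (collapseSetoid K) y → x = y) ∧
    (∀ i : I, ∃ p : Quotient (collapseSetoid K),
      ∀ x ∈ K i, Quotient.mk (collapseSetoid K) x = p) ∧
    (∀ i j : I, i ≠ j → ∀ x ∈ K i, ∀ y ∈ K j,
      Quotient.mk (collapseSetoid K) x ≠ Quotient.mk (collapseSetoid K) y) := by
  set q : α → Quotient (collapseSetoid K) := Quotient.mk (collapseSetoid K) with hq
  have heq : ∀ x y : α, q x = q y ↔ collapseRel K x y := fun x y =>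
    collapse_mk_eq_iff K hdisj
  have hqcont : Continuous q := continuous_quot_mk
  have hqsurj : Function.Surjective q := Quotient.mk_surjective
  -- The graph of the relation as a set
  set S : Set (α × α) := Set.diagonal α ∪ ⋃ i, K i ×ˢ K i with hSdef
  have hSrel : ∀ x y : α, (x, y) ∈ S ↔ collapseRel K x y := by
    intro x y
    simp [hSdef, collapseRel, Set.mem_diagonal_iff]
  have hlf2 : LocallyFinite (fun i => K i ×ˢ K i) := by
    intro p
    obtain ⟨U, hU, hfin⟩ := hlf p.1
    refine ⟨U ×ˢ Set.univ, prod_mem_nhds hU Filter.univ_mem, hfin.subset ?_⟩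
    rintro i ⟨z, ⟨hz1, hz2⟩⟩
    exact ⟨z.1, hz1.1, hz2.1⟩
  have hS : IsClosed S :=
    isClosed_diagonal.union
      (hlf2.isClosed_iUnion fun i => ((hcpt i).prod (hcpt i)).isClosed)
  -- the quotient map is a closed map
  have hqm : Topology.IsQuotientMap q := ⟨⟨rfl⟩, Quot.exists_rep⟩
  have hclosed : IsClosedMap q := by
    intro C hC
    rw [← hqm.isClosed_preimage]
    have hpre : q ⁻¹' (q '' C) = Prod.fst '' (S ∩ Set.univ ×ˢ C) := by
      ext x
      constructor
      · rintro ⟨y, hyC, hxy⟩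
        exact ⟨(x, y), ⟨(hSrel x y).2 ((heq x y).1 hxy.symm), ⟨trivial, hyC⟩⟩, rfl⟩
      · rintro ⟨⟨x', y⟩, ⟨hSxy, ⟨-, hyC⟩⟩, rfl⟩
        exact ⟨y, hyC, ((heq _ y).2 ((hSrel _ y).1 hSxy)).symm⟩
    rw [hpre]
    exact (((hS.inter (isClosed_univ.prod hC)).isCompact).image continuous_fst).isClosed
  -- equivalence classes are closed
  have hclcl : ∀ a : α, IsClosed (q ⁻¹' {q a}) := by
    intro a
    have : q ⁻¹' {q a} = (fun y => (y, a)) ⁻¹' S := by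
      ext y
      simp only [Set.mem_preimage, Set.mem_singleton_iff, hSrel y a, ← heq y a]
    rw [this]
    exact hS.preimage (continuous_id.prodMk continuous_const)
  -- saturated open neighborhoods from closedness of q
  have hsat : ∀ U : Set α, IsOpen U → IsOpen ((q '' Uᶜ)ᶜ) := fun U hU =>
    (hclosed _ hU.isClosed_compl).isOpen_compl
  have hmem_sat : ∀ (U : Set α) (a : α), q ⁻¹' {q a} ⊆ U → q a ∈ (q '' Uᶜ)ᶜ := by
    intro U a hsub hmem
    obtain ⟨y, hyU, hy⟩ := hmem
    exact hyU (hsub (by simpa using hy))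
  have hpre_sat : ∀ (U : Set α) (x : α), q x ∈ (q '' Uᶜ)ᶜ → x ∈ U := by
    intro U x hx
    by_contra hxU
    exact hx ⟨x, hxU, rfl⟩
  -- Hausdorffness of the quotient
  have hT2 : T2Space (Quotient (collapseSetoid K)) := by
    constructor
    intro z w hzw
    obtain ⟨a, rfl⟩ := hqsurj z
    obtain ⟨b, rfl⟩ := hqsurj w
    have hdisjcl : Disjoint (q ⁻¹' {q a}) (q ⁻¹' {q b}) := by
      rw [Set.disjoint_left]
      intro y hya hyb
      simp only [Set.mem_preimage, Set.mem_singleton_iff] at hya hyb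
      exact hzw (hya ▸ hyb ▸ rfl)
    obtain ⟨U, V, hUo, hVo, haU, hbV, hUV⟩ :=
      normal_separation (hclcl a) (hclcl b) hdisjcl
    refine ⟨(q '' Uᶜ)ᶜ, (q '' Vᶜ)ᶜ, hsat U hUo, hsat V hVo,
      hmem_sat U a haU, hmem_sat V b hbV, ?_⟩
    rw [Set.disjoint_left]
    intro z hzU hzV
    obtain ⟨x, rfl⟩ := hqsurj z
    exact Set.disjoint_left.mp hUV (hpre_sat U x hzU) (hpre_sat V x hzV)
  -- points of X have singleton classes
  have hXsing : ∀ a : α, a ∈ X → ∀ y : α, q y = q a → y = a := by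
    intro a ha y hy
    rcases (heq y a).1 hy with rfl | ⟨i, -, hai⟩
    · rfl
    · exact absurd ha (hKX i hai)
  -- union of the K i is closed
  have hKcl : IsClosed (⋃ i, K i) := hlf.isClosed_iUnion fun i => (hcpt i).isClosed
  -- dense range
  have hdr : DenseRange (fun x : X => q (x : α)) := by
    have hr : Set.range (fun x : X => q (x : α)) = q '' X := by
      rw [← Set.image_univ, ← Set.image_image q Subtype.val, Set.image_univ,
        Subtype.range_coe]
    rw [DenseRange, hr]
    intro z
    obtain ⟨x, rfl⟩ := hqsurj z
    exact image_closure_subset_closure_image hqcont ⟨x, hX x, rfl⟩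
  -- injectivity on X
  have hinj : Function.Injective (fun x : X => q (x : α)) := by
    intro x y hxy
    exact Subtype.ext (hXsing y y.2 x hxy)
  -- dense embedding
  have hde : IsDenseEmbedding (fun x : X => q (x : α)) := by
    refine IsDenseEmbedding.mk' _ (hqcont.comp continuous_subtype_val) hdr hinj ?_
    intro a s hs
    rw [mem_nhds_subtype] at hs
    obtain ⟨O, hO, hOs⟩ := hs
    obtain ⟨O₁, hO₁O, hO₁o, haO₁⟩ := mem_nhds_iff.1 hO
    set W : Set α := O₁ ∩ (⋃ i, K i)ᶜ with hWdef
    have hWo : IsOpen W := hO₁o.inter hKcl.isOpen_compl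
    have haW : (a : α) ∈ W := by
      refine ⟨haO₁, ?_⟩
      simp only [Set.mem_compl_iff, Set.mem_iUnion, not_exists]
      exact fun i hi => hKX i hi a.2
    have hclsub : q ⁻¹' {q (a : α)} ⊆ W := by
      intro y hy
      rw [Set.mem_preimage, Set.mem_singleton_iff] at hy
      rw [hXsing a a.2 y hy]
      exact haW
    refine ⟨(q '' Wᶜ)ᶜ, ((hsat W hWo).mem_nhds (hmem_sat W a hclsub)), ?_⟩
    intro b hb
    exact hOs (hO₁O (hpre_sat W (b : α) hb).1)
  refine ⟨hqcont, inferInstance, hT2, hde, ?_, ?_, ?_⟩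
  · -- injectivity off the union
    intro x y hx _ hxy
    rcases (heq x y).1 hxy with rfl | ⟨i, hxi, -⟩
    · rfl
    · exact absurd (Set.mem_iUnion.2 ⟨i, hxi⟩) hx
  · -- each K i collapses to one point
    intro i
    refine ⟨q (hne i).choose, fun x hx => ?_⟩
    exact (heq _ _).2 (Or.inr ⟨i, hx, (hne i).choose_spec⟩)
  · -- distinct points for distinct i
    intro i j hij x hx y hy hxy
    rcases (heq x y).1 hxy with rfl | ⟨k, hxk, hyk⟩
    · exact hij (collapse_index_eq hdisj hx hy)
    · exact hij ((collapse_index_eq hdisj hxk hx).symm.trans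
        (collapse_index_eq hdisj hyk hy))
end

section
/- Let X be a Tychonoff space and let π₁ and π₂ be two partitions of βX by compact sets, each containing {x} as a block for every x ∈ X, whose quotients βX/π₁ and βX/π₂ are Hausdorff compactifications of X. Then the partition π = { A ∩ B : A ∈ π₁, B ∈ π₂, A ∩ B ≠ ∅ } is a partition of βX by compact sets containing all singletons {x}, x ∈ X, and the quotient βX/π is (when Hausdorff) the join (least upper bound) of βX/π₁ and βX/π₂ in the ordered set of Hausdorff compactifications of X. -/
/-- The common refinement of two partitions: all nonempty intersections of a
block of the first with a block of the second. -/
def commonRefinement {β : Type*} (π₁ π₂ : Set (Set β)) : Set (Set β) :=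
  {C | ∃ A ∈ π₁, ∃ B ∈ π₂, (A ∩ B).Nonempty ∧ C = A ∩ B}

/-- Let `π₁`, `π₂` be partitions of `βX` by compact sets, with singleton blocks
at points of `X`, whose quotients are Hausdorff.  Then the common refinement
`π = {A ∩ B ≠ ∅}` is again such a partition (by compact sets, with singleton
blocks at points of `X`), it is the partition into classes of the meet of the
two corresponding setoids, and (when its quotient is Hausdorff) that quotient
is the least upper bound of `βX/π₁` and `βX/π₂` among Hausdorff
compactifications of `X`: it maps continuously onto each of them fixing `X`,
and any Hausdorff compactification of `X` mapping onto both fixing `X` also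
maps onto it fixing `X`. -/
theorem stmt11 {X : Type u} [TopologicalSpace X] [T35Space X]
    (π₁ π₂ : Set (Set (StoneCech X)))
    (h₁ : Setoid.IsPartition π₁) (h₂ : Setoid.IsPartition π₂)
    (hcpt₁ : ∀ A ∈ π₁, IsCompact A) (hcpt₂ : ∀ B ∈ π₂, IsCompact B)
    (hsing₁ : ∀ x : X, {stoneCechUnit x} ∈ π₁)
    (hsing₂ : ∀ x : X, {stoneCechUnit x} ∈ π₂)
    (hT2₁ : T2Space (Quotient (Setoid.mkClasses π₁ h₁.2)))
    (hT2₂ : T2Space (Quotient (Setoid.mkClasses π₂ h₂.2)))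
    (hT2 : T2Space (Quotient (Setoid.mkClasses π₁ h₁.2 ⊓ Setoid.mkClasses π₂ h₂.2))) :
    Setoid.IsPartition (commonRefinement π₁ π₂) ∧
    (∀ C ∈ commonRefinement π₁ π₂, IsCompact C) ∧
    (∀ x : X, {stoneCechUnit x} ∈ commonRefinement π₁ π₂) ∧
    (Setoid.mkClasses π₁ h₁.2 ⊓ Setoid.mkClasses π₂ h₂.2).classes
      = commonRefinement π₁ π₂ ∧
    (∃ g₁ : Quotient (Setoid.mkClasses π₁ h₁.2 ⊓ Setoid.mkClasses π₂ h₂.2) →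
        Quotient (Setoid.mkClasses π₁ h₁.2), Continuous g₁ ∧ ∀ x : X,
        g₁ (Quotient.mk _ (stoneCechUnit x)) = Quotient.mk _ (stoneCechUnit x)) ∧
    (∃ g₂ : Quotient (Setoid.mkClasses π₁ h₁.2 ⊓ Setoid.mkClasses π₂ h₂.2) →
        Quotient (Setoid.mkClasses π₂ h₂.2), Continuous g₂ ∧ ∀ x : X,
        g₂ (Quotient.mk _ (stoneCechUnit x)) = Quotient.mk _ (stoneCechUnit x)) ∧
    (∀ (γ : Type u) [TopologicalSpace γ] [CompactSpace γ] [T2Space γ]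
        (eγ : X → γ), IsDenseEmbedding eγ →
      (∃ g₁ : γ → Quotient (Setoid.mkClasses π₁ h₁.2), Continuous g₁ ∧
        ∀ x : X, g₁ (eγ x) = Quotient.mk _ (stoneCechUnit x)) →
      (∃ g₂ : γ → Quotient (Setoid.mkClasses π₂ h₂.2), Continuous g₂ ∧
        ∀ x : X, g₂ (eγ x) = Quotient.mk _ (stoneCechUnit x)) →
      ∃ g : γ → Quotient (Setoid.mkClasses π₁ h₁.2 ⊓ Setoid.mkClasses π₂ h₂.2),
        Continuous g ∧ ∀ x : X, g (eγ x) = Quotient.mk _ (stoneCechUnit x)) := by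
  set s₁ := Setoid.mkClasses π₁ h₁.2 with hs₁
  set s₂ := Setoid.mkClasses π₂ h₂.2 with hs₂
  -- key identification of classes of the inf with the common refinement
  have hkey : (s₁ ⊓ s₂).classes = commonRefinement π₁ π₂ := by
    ext C
    constructor
    · rintro ⟨y, rfl⟩
      obtain ⟨A, ⟨hA, hyA⟩, -⟩ := h₁.2 y
      obtain ⟨B, ⟨hB, hyB⟩, -⟩ := h₂.2 y
      refine ⟨A, hA, B, hB, ⟨y, hyA, hyB⟩, ?_⟩
      have e1 : A = {x | s₁ x y} := Setoid.eq_eqv_class_of_mem h₁.2 hA hyA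
      have e2 : B = {x | s₂ x y} := Setoid.eq_eqv_class_of_mem h₂.2 hB hyB
      rw [e1, e2]
      ext x
      simp only [Set.mem_inter_iff, Set.mem_setOf_eq]
      exact Setoid.inf_iff_and
    · rintro ⟨A, hA, B, hB, ⟨y, hyA, hyB⟩, rfl⟩
      refine ⟨y, ?_⟩
      have e1 : A = {x | s₁ x y} := Setoid.eq_eqv_class_of_mem h₁.2 hA hyA
      have e2 : B = {x | s₂ x y} := Setoid.eq_eqv_class_of_mem h₂.2 hB hyB
      rw [e1, e2]
      ext x
      simp only [Set.mem_inter_iff, Set.mem_setOf_eq]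
      exact Setoid.inf_iff_and.symm
  refine ⟨?_, ?_, ?_, hkey, ?_, ?_, ?_⟩
  · rw [← hkey]; exact Setoid.isPartition_classes _
  · rintro C ⟨A, hA, B, hB, -, rfl⟩
    exact (hcpt₁ A hA).inter_right ((hcpt₂ B hB).isClosed)
  · intro x
    exact ⟨{stoneCechUnit x}, hsing₁ x, {stoneCechUnit x}, hsing₂ x,
      ⟨stoneCechUnit x, rfl, rfl⟩, (Set.inter_self _).symm⟩
  · refine ⟨Quotient.lift (fun p => Quotient.mk s₁ p)
      (fun a b h => Quotient.sound (Setoid.inf_iff_and.mp h).1), ?_, fun x => rfl⟩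
    exact continuous_quot_mk.quotient_lift _
  · refine ⟨Quotient.lift (fun p => Quotient.mk s₂ p)
      (fun a b h => Quotient.sound (Setoid.inf_iff_and.mp h).2), ?_, fun x => rfl⟩
    exact continuous_quot_mk.quotient_lift _
  · rintro γ _ _ _ eγ hde ⟨g₁, hg₁c, hg₁⟩ ⟨g₂, hg₂c, hg₂⟩
    have hce : Continuous eγ := hde.continuous
    set f := stoneCechExtend hce with hf
    have hfc : Continuous f := continuous_stoneCechExtend hce
    have hfu : ∀ x, f (stoneCechUnit x) = eγ x := fun x =>
      congrFun (stoneCechExtend_extends hce) x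
    have hfsurj : Function.Surjective f := by
      rw [← Set.range_eq_univ]
      have hcl : IsClosed (Set.range f) := (isCompact_range hfc).isClosed
      have hd : Dense (Set.range f) := by
        refine hde.dense.mono ?_
        rintro _ ⟨x, rfl⟩
        exact ⟨stoneCechUnit x, hfu x⟩
      rw [← hcl.closure_eq]
      exact hd.closure_eq
    have hqm := Topology.IsQuotientMap.of_surjective_continuous hfsurj hfc
    have hg₁f : g₁ ∘ f = fun p => Quotient.mk s₁ p := by
      refine Continuous.ext_on denseRange_stoneCechUnit (hg₁c.comp hfc)
        continuous_quot_mk ?_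
      rintro _ ⟨x, rfl⟩
      simp only [Function.comp_apply, hfu, hg₁]
    have hg₂f : g₂ ∘ f = fun p => Quotient.mk s₂ p := by
      refine Continuous.ext_on denseRange_stoneCechUnit (hg₂c.comp hfc)
        continuous_quot_mk ?_
      rintro _ ⟨x, rfl⟩
      simp only [Function.comp_apply, hfu, hg₂]
    have hresp : ∀ p q : StoneCech X, f p = f q → (s₁ ⊓ s₂) p q := by
      intro p q hpq
      refine Setoid.inf_iff_and.mpr ⟨?_, ?_⟩
      · have := congrFun hg₁f p
        have h2 := congrFun hg₁f q
        simp only [Function.comp_apply] at this h2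
        exact Quotient.exact (this ▸ h2 ▸ congrArg g₁ hpq)
      · have := congrFun hg₂f p
        have h2 := congrFun hg₂f q
        simp only [Function.comp_apply] at this h2
        exact Quotient.exact (this ▸ h2 ▸ congrArg g₂ hpq)
    set g : γ → Quotient (s₁ ⊓ s₂) :=
      fun y => Quotient.mk (s₁ ⊓ s₂) (Function.surjInv hfsurj y) with hg
    have hgf : ∀ p, g (f p) = Quotient.mk (s₁ ⊓ s₂) p := by
      intro p
      exact Quotient.sound (hresp _ _ (Function.surjInv_eq hfsurj (f p)))
    refine ⟨g, ?_, fun x => by rw [← hfu x, hgf]⟩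
    rw [hqm.continuous_iff]
    have : g ∘ f = fun p => Quotient.mk (s₁ ⊓ s₂) p := funext hgf
    rw [this]
    exact continuous_quot_mk
end

section
/- Let Y be the set of locally compact points of a Tychonoff space X, and suppose Y is dense in X. Then the map sending each Hausdorff compactification of X to itself, viewed as a Hausdorff compactification of Y, is an injective order-embedding of the partially ordered set K(X) of Hausdorff compactifications of X into the partially ordered set K(Y), which moreover preserves binary joins. -/
/-- Let `Y` be the set of locally compact points of a Tychonoff space `X`
(points with a compact neighbourhood) and suppose `Y` is dense in `X`.
Viewing each Hausdorff compactification of `X` (given by a dense embedding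
`e : X → α`) as a compactification of `Y` (via `e` restricted to `Y`), the
resulting map `K(X) → K(Y)` is an order-embedding: the compactification order
over `X` holds iff it holds over `Y` (this gives injectivity on equivalence
classes), and it preserves binary joins: a least upper bound of two
compactifications of `X` in the `X`-order is a least upper bound in the
`Y`-order. -/
theorem stmt13 {X : Type u} [TopologicalSpace X] [T35Space X]
    (Y : Set X) (hYdef : Y = {x : X | ∃ K : Set X, IsCompact K ∧ K ∈ nhds x})
    (hYdense : Dense Y) :
    (∀ (α₁ α₂ : Type u) [TopologicalSpace α₁] [CompactSpace α₁] [T2Space α₁]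
        [TopologicalSpace α₂] [CompactSpace α₂] [T2Space α₂]
        (e₁ : X → α₁) (e₂ : X → α₂),
        IsDenseEmbedding e₁ → IsDenseEmbedding e₂ →
      ((∃ f : α₁ → α₂, Continuous f ∧ ∀ x : X, f (e₁ x) = e₂ x) ↔
        (∃ f : α₁ → α₂, Continuous f ∧ ∀ y ∈ Y, f (e₁ y) = e₂ y))) ∧
    (∀ (α₁ α₂ γ : Type u) [TopologicalSpace α₁] [CompactSpace α₁] [T2Space α₁]
        [TopologicalSpace α₂] [CompactSpace α₂] [T2Space α₂]
        [TopologicalSpace γ] [CompactSpace γ] [T2Space γ]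
        (e₁ : X → α₁) (e₂ : X → α₂) (eγ : X → γ),
        IsDenseEmbedding e₁ → IsDenseEmbedding e₂ → IsDenseEmbedding eγ →
      -- `γ` is an upper bound of `α₁, α₂` over `X`
      (∃ f : γ → α₁, Continuous f ∧ ∀ x : X, f (eγ x) = e₁ x) →
      (∃ f : γ → α₂, Continuous f ∧ ∀ x : X, f (eγ x) = e₂ x) →
      -- `γ` is a least such: any compactification of `X` above both over `X`
      -- lies above `γ` over `X`
      (∀ (δ : Type u) [TopologicalSpace δ] [CompactSpace δ] [T2Space δ]
          (eδ : X → δ), IsDenseEmbedding eδ →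
        (∃ f : δ → α₁, Continuous f ∧ ∀ x : X, f (eδ x) = e₁ x) →
        (∃ f : δ → α₂, Continuous f ∧ ∀ x : X, f (eδ x) = e₂ x) →
        (∃ f : δ → γ, Continuous f ∧ ∀ x : X, f (eδ x) = eγ x)) →
      -- then `γ` is also a least upper bound of `α₁, α₂` over `Y`
      ((∃ f : γ → α₁, Continuous f ∧ ∀ y ∈ Y, f (eγ y) = e₁ y) ∧
       (∃ f : γ → α₂, Continuous f ∧ ∀ y ∈ Y, f (eγ y) = e₂ y) ∧
       (∀ (δ : Type u) [TopologicalSpace δ] [CompactSpace δ] [T2Space δ]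
          (eδ : Y → δ), IsDenseEmbedding eδ →
        (∃ f : δ → α₁, Continuous f ∧ ∀ y : Y, f (eδ y) = e₁ y) →
        (∃ f : δ → α₂, Continuous f ∧ ∀ y : Y, f (eδ y) = e₂ y) →
        (∃ f : δ → γ, Continuous f ∧ ∀ y : Y, f (eδ y) = eγ y)))) := by
  constructor
  · intro α₁ α₂ _ _ _ _ _ _ e₁ e₂ he₁ he₂
    constructor
    · rintro ⟨f, hf, hfe⟩
      exact ⟨f, hf, fun y _ => hfe y⟩
    · rintro ⟨f, hf, hfe⟩
      refine ⟨f, hf, fun x => ?_⟩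
      have h : f ∘ e₁ = e₂ :=
        Continuous.ext_on hYdense (hf.comp he₁.continuous) he₂.continuous hfe
      exact congrFun h x
  · intro α₁ α₂ γ _ _ _ _ _ _ _ _ _ e₁ e₂ eγ he₁ he₂ heγ h1 h2 hleast
    obtain ⟨f₁, hf₁, hfe₁⟩ := h1
    obtain ⟨f₂, hf₂, hfe₂⟩ := h2
    refine ⟨⟨f₁, hf₁, fun y _ => hfe₁ y⟩, ⟨f₂, hf₂, fun y _ => hfe₂ y⟩, ?_⟩
    intro δ _ _ _ eδ heδ hd1 hd2
    obtain ⟨g₁, hg₁, hge₁⟩ := hd1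
    obtain ⟨g₂, hg₂, hge₂⟩ := hd2
    set S : Set (α₁ × α₂) := Set.range (fun x : X => (e₁ x, e₂ x)) with hS
    set Z : Set (α₁ × α₂) := closure S with hZ
    have hZc : IsClosed Z := isClosed_closure
    haveI : CompactSpace Z := isCompact_iff_compactSpace.mp hZc.isCompact
    have hj0 : ∀ x : X, ((e₁ x, e₂ x) : α₁ × α₂) ∈ Z :=
      fun x => subset_closure ⟨x, rfl⟩
    set j : X → Z := fun x => ⟨(e₁ x, e₂ x), hj0 x⟩ with hjdef
    have hjc : Continuous j :=
      Continuous.subtype_mk (he₁.continuous.prodMk he₂.continuous) _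
    have hjind : Topology.IsInducing j := by
      have hcomp : Topology.IsInducing ((Prod.fst ∘ Subtype.val) ∘ j) := he₁.toIsInducing
      exact Topology.IsInducing.of_comp hjc
        (continuous_fst.comp continuous_subtype_val) hcomp
    have hjinj : Function.Injective j := fun a b hab =>
      he₁.injective (congrArg (fun z : Z => (z : α₁ × α₂).1) hab)
    have hjd : DenseRange j := by
      intro z
      rw [closure_subtype]
      have himg : Subtype.val '' Set.range j = S := by
        ext p
        constructor
        · rintro ⟨z', ⟨x, rfl⟩, rfl⟩
          exact ⟨x, rfl⟩
        · rintro ⟨x, rfl⟩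
          exact ⟨j x, ⟨x, rfl⟩, rfl⟩
      rw [himg]
      exact z.2
    have hje : IsDenseEmbedding j := ⟨⟨hjind, hjd⟩, hjinj⟩
    obtain ⟨k, hk, hke⟩ := hleast (↥Z) j hje
      ⟨fun z => (z : α₁ × α₂).1, continuous_fst.comp continuous_subtype_val,
        fun x => rfl⟩
      ⟨fun z => (z : α₁ × α₂).2, continuous_snd.comp continuous_subtype_val,
        fun x => rfl⟩
    have hFmem : ∀ d : δ, ((g₁ d, g₂ d) : α₁ × α₂) ∈ Z := by
      intro d
      have hc : Continuous (fun d : δ => ((g₁ d, g₂ d) : α₁ × α₂)) :=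
        hg₁.prodMk hg₂
      have h1 : ((g₁ d, g₂ d) : α₁ × α₂) ∈
          (fun d : δ => ((g₁ d, g₂ d) : α₁ × α₂)) '' closure (Set.range eδ) :=
        ⟨d, heδ.dense d, rfl⟩
      have h2 := image_closure_subset_closure_image hc h1
      refine closure_minimal ?_ hZc h2
      rintro p ⟨d', ⟨y, rfl⟩, rfl⟩
      refine subset_closure ⟨(y : X), ?_⟩
      simp [hge₁ y, hge₂ y]
    refine ⟨fun d => k ⟨(g₁ d, g₂ d), hFmem d⟩,
      hk.comp (Continuous.subtype_mk (hg₁.prodMk hg₂) _), fun y => ?_⟩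
    show k ⟨(g₁ (eδ y), g₂ (eδ y)), hFmem (eδ y)⟩ = eγ (y : X)
    have heq : (⟨(g₁ (eδ y), g₂ (eδ y)), hFmem (eδ y)⟩ : Z) = j (y : X) :=
      Subtype.ext (by simp [hjdef, hge₁ y, hge₂ y])
    rw [heq, hke]
end
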